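/- Let 𝔽_q be a finite field, let f ∈ 𝔽_q[X] be a polynomial of degree d ≥ 1, let c ∈ 𝔽_q with c ≠ 0 and c² ≠ 1, let a ∈ 𝔽_q with a ≠ 0, and let b ∈ 𝔽_q. Then the c-Boomerang Connectivity Table entry satisfies ₍c₎B_f(a,b) ≤ d², where f is identified with its evaluation map 𝔽_q → 𝔽_q. -/

import Mathlib

open Polynomial Matrix

namespace CBoom

variable {A : Type*} [CommRing A]

/-- polynomial from a coefficient vector of length `d` -/
noncomputable def polyOfVec {d : ℕ} (v : Fin d → A) : A[X] :=
  ∑ i : Fin d, Polynomial.monomial (i : ℕ) (v i)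

lemma polyOfVec_coeff {d : ℕ} (v : Fin d → A) (i : Fin d) :
    (polyOfVec v).coeff i = v i := by
  classical
  rw [polyOfVec, finset_sum_coeff]
  rw [Finset.sum_eq_single i]
  · simp
  · intro j _ hj
    rw [coeff_monomial, if_neg]
    exact fun h => hj (by ext; omega)
  · simp

lemma polyOfVec_eq {d : ℕ} (w : A[X]) (h : w.natDegree < d) :
    polyOfVec (fun i : Fin d => w.coeff i) = w := by
  rw [polyOfVec, Fin.sum_univ_eq_sum_range (fun i => Polynomial.monomial i (w.coeff i))]
  exact (Polynomial.as_sum_range' w d h).symm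

/-- column index for the Sylvester-type matrix -/
def colIdx (d : ℕ) : Fin d ⊕ Fin d → ℕ := Sum.elim (fun i => (i : ℕ)) (fun i => d + i)

/-- Sylvester-type matrix of two polynomials (formal degree `d` each). -/
noncomputable def sylMat (d : ℕ) (p q : A[X]) :
    Matrix (Fin d ⊕ Fin d) (Fin d ⊕ Fin d) A :=
  Matrix.of fun r j =>
    Sum.elim
      (fun i : Fin d => if (i : ℕ) ≤ colIdx d j then p.coeff (colIdx d j - i) else 0)
      (fun i : Fin d => if (i : ℕ) ≤ colIdx d j then q.coeff (colIdx d j - i) else 0) r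

lemma coeff_mul_single {d : ℕ} (v : Fin d → A) (p : A[X]) (n : ℕ) :
    (polyOfVec v * p).coeff n
      = ∑ i : Fin d, v i * (if (i : ℕ) ≤ n then p.coeff (n - i) else 0) := by
  rw [polyOfVec, Finset.sum_mul, finset_sum_coeff]
  refine Finset.sum_congr rfl fun i _ => ?_
  rw [← Polynomial.C_mul_X_pow_eq_monomial, mul_assoc, mul_comm (X ^ (i:ℕ)) p,
    ← mul_assoc, Polynomial.coeff_mul_X_pow', Polynomial.coeff_C_mul]
  simp [mul_ite]

/-- Bridge between kernel vectors and polynomial relations. -/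
lemma vecMul_sylMat {d : ℕ} (p q : A[X]) (lam : Fin d ⊕ Fin d → A) (j : Fin d ⊕ Fin d) :
    Matrix.vecMul lam (sylMat d p q) j
      = (polyOfVec (lam ∘ Sum.inl) * p + polyOfVec (lam ∘ Sum.inr) * q).coeff (colIdx d j) := by
  rw [Polynomial.coeff_add, coeff_mul_single, coeff_mul_single]
  rw [Matrix.vecMul, dotProduct]
  rw [Fintype.sum_sum_type]
  rfl

lemma sylMat_map {d : ℕ} {B : Type*} [CommRing B] (φ : A →+* B) (p q : A[X]) :
    (sylMat d p q).map φ = sylMat d (p.map φ) (q.map φ) := by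
  ext r j
  cases r with
  | inl i => simp [sylMat, apply_ite φ, Polynomial.coeff_map]
  | inr i => simp [sylMat, apply_ite φ, Polynomial.coeff_map]

/-- coefficient of a product at the sum of individual degree caps -/
lemma coeff_prod_caps {ι : Type*} (s : Finset ι) (f : ι → A[X]) (n : ι → ℕ)
    (h : ∀ i ∈ s, (f i).natDegree ≤ n i) :
    (∏ i ∈ s, f i).coeff (∑ i ∈ s, n i) = ∏ i ∈ s, (f i).coeff (n i) := by
  classical
  induction s using Finset.cons_induction with
  | empty => simp
  | cons a s ha ih =>
    rw [Finset.prod_cons, Finset.sum_cons, Finset.prod_cons,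
      ← ih (fun i hi => h i (Finset.mem_cons_of_mem hi))]
    have h1 : (f a).natDegree ≤ n a := h a (Finset.mem_cons_self a s)
    have h2 : (∏ i ∈ s, f i).natDegree ≤ ∑ i ∈ s, n i :=
      (Polynomial.natDegree_prod_le s f).trans
        (Finset.sum_le_sum fun i hi => h i (Finset.mem_cons_of_mem hi))
    -- coeff (p*q) (m+n) = coeff p m * coeff q n when natDegree p ≤ m, natDegree q ≤ n
    rw [Polynomial.coeff_mul]
    rw [Finset.sum_eq_single (n a, ∑ i ∈ s, n i)]
    · intro w hw hne
      rw [Finset.HasAntidiagonal.mem_antidiagonal] at hw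
      rcases lt_or_ge (n a) w.1 with hlt | hle
      · rw [Polynomial.coeff_eq_zero_of_natDegree_lt (lt_of_le_of_lt h1 hlt), zero_mul]
      · have hne' : w.1 ≠ n a ∨ w.2 ≠ ∑ i ∈ s, n i := by
          by_contra hcon
          push_neg at hcon
          exact hne (Prod.ext hcon.1 hcon.2)
        have : (∑ i ∈ s, n i) < w.2 := by omega
        rw [Polynomial.coeff_eq_zero_of_natDegree_lt (lt_of_le_of_lt h2 this), mul_zero]
    · intro hmem
      rw [Finset.HasAntidiagonal.mem_antidiagonal] at hmem
      exact absurd rfl hmem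

/-- If each row in `s` is entrywise divisible by `r`, then `r ^ s.card` divides the
determinant. -/
lemma pow_dvd_det_of_rows {n : Type*} [Fintype n] [DecidableEq n]
    (M : Matrix n n A) (r : A) (s : Finset n)
    (h : ∀ i ∈ s, ∀ j, r ∣ M i j) : r ^ s.card ∣ M.det := by
  classical
  induction s using Finset.cons_induction generalizing M with
  | empty => simp
  | cons a s ha ih =>
    have hrow : ∀ j, r ∣ M a j := fun j => h a (Finset.mem_cons_self a s) j
    choose w hw using hrow
    have hMa : M a = r • w := by funext j; simpa [Pi.smul_apply, smul_eq_mul] using hw j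
    have : M.det = r * (M.updateRow a w).det := by
      conv_lhs => rw [← Matrix.updateRow_eq_self M a, hMa, Matrix.det_updateRow_smul]
    rw [this, Finset.card_cons, pow_succ']
    refine mul_dvd_mul dvd_rfl (ih _ fun i hi j => ?_)
    have hia : i ≠ a := fun he => ha (by rwa [he] at hi)
    rw [Matrix.updateRow_ne hia]
    exact h i (Finset.mem_cons_of_mem hi) j

end CBoom

namespace CBoom

variable {𝔽 : Type*} [Field 𝔽]

/-- If the evaluated matrix has a `k`-dimensional left kernel, `(X - C v₀) ^ k` divides the
determinant. -/
lemma pow_dvd_det_of_ker {n : Type*} [Fintype n] [DecidableEq n]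
    (M : Matrix n n (Polynomial 𝔽)) (v₀ : 𝔽) {k : ℕ} (v : Fin k → n → 𝔽)
    (hli : LinearIndependent 𝔽 v)
    (hker : ∀ t, Matrix.vecMul (v t) (M.map (Polynomial.evalRingHom v₀)) = 0) :
    (X - Polynomial.C v₀) ^ k ∣ M.det := by
  classical
  have hinj : Function.Injective v := hli.injective
  have hsr : LinearIndepOn 𝔽 id (Set.range v) :=
    (linearIndepOn_id_range_iff hinj).mpr hli
  let b0 := Module.Basis.extend hsr
  haveI : Fintype (hsr.extend (Set.subset_univ (Set.range v))) :=
    FiniteDimensional.fintypeBasisIndex b0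
  let ε := b0.indexEquiv (Pi.basisFun 𝔽 n)
  let b := b0.reindex ε
  let ρ : Fin k → n := fun t => ε ⟨v t, hsr.subset_extend _ ⟨t, rfl⟩⟩
  have hbρ : ∀ t, b (ρ t) = v t := by
    intro t
    simp only [b, Module.Basis.reindex_apply, ρ, Equiv.symm_apply_apply]
    exact Module.Basis.extend_apply_self hsr _
  have hρinj : Function.Injective ρ := by
    intro t t' h
    have := congrArg b h
    rw [hbρ, hbρ] at this
    exact hinj this
  -- invertible matrix whose rows are the basis
  let W : Matrix n n 𝔽 := Matrix.of fun i j => b i j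
  have hW : IsUnit W.det := by
    have h1 : (Pi.basisFun 𝔽 n).toMatrix b = Wᵀ := by
      ext i j
      simp [Module.Basis.toMatrix_apply, W, Matrix.transpose_apply]
    have : Invertible ((Pi.basisFun 𝔽 n).toMatrix b) := Module.Basis.invertibleToMatrix _ _
    rw [h1] at this
    have := Matrix.isUnit_det_of_invertible Wᵀ
    rwa [Matrix.det_transpose] at this
  let G := W.map (Polynomial.C : 𝔽 →+* Polynomial 𝔽) * M
  have hrows : ∀ i ∈ Finset.univ.image ρ, ∀ j, (X - Polynomial.C v₀) ∣ G i j := by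
    intro i hi j
    obtain ⟨t, _, rfl⟩ := Finset.mem_image.mp hi
    rw [Polynomial.dvd_iff_isRoot]
    have : Polynomial.evalRingHom v₀ (G (ρ t) j) = 0 := by
      have : G (ρ t) j = ∑ l, Polynomial.C (W (ρ t) l) * M l j := by
        simp [G, Matrix.mul_apply, Matrix.map_apply]
      rw [this, map_sum]
      have := congrFun (hker t) j
      rw [Matrix.vecMul, dotProduct] at this
      calc ∑ l, Polynomial.evalRingHom v₀ (Polynomial.C (W (ρ t) l) * M l j)
          = ∑ l, v t l * (M.map (Polynomial.evalRingHom v₀)) l j := by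
            refine Finset.sum_congr rfl fun l _ => ?_
            rw [_root_.map_mul]
            have h1 : (Polynomial.evalRingHom v₀) (Polynomial.C (W (ρ t) l)) = v t l := by
              simp only [Polynomial.coe_evalRingHom, Polynomial.eval_C]
              exact congrFun (hbρ t) l
            rw [h1]
            rfl
        _ = 0 := this
    simpa [Polynomial.IsRoot] using this
  have hdvd : (X - Polynomial.C v₀) ^ (Finset.univ.image ρ).card ∣ G.det :=
    pow_dvd_det_of_rows G _ _ hrows
  rw [Finset.card_image_of_injective _ hρinj, Finset.card_univ, Fintype.card_fin] at hdvd
  have hGdet : G.det = Polynomial.C W.det * M.det := by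
    rw [Matrix.det_mul]
    congr 1
    rw [show W.map ⇑(Polynomial.C : 𝔽 →+* Polynomial 𝔽)
        = (Polynomial.C : 𝔽 →+* Polynomial 𝔽).mapMatrix W from rfl, ← RingHom.map_det]
  rw [hGdet] at hdvd
  exact (IsUnit.dvd_mul_left (by exact (Polynomial.isUnit_C).mpr hW)).mp hdvd

end CBoom

namespace Part2

open CBoom

variable {𝔽 : Type*} [Field 𝔽]

/-- the polynomial `S(V) = (f(V) - b)/c` -/
noncomputable def Spoly (f : 𝔽[X]) (c b : 𝔽) : 𝔽[X] := Polynomial.C c⁻¹ * (f - Polynomial.C b)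

/-- `f(X + a)` -/
noncomputable def fshift (f : 𝔽[X]) (a : 𝔽) : 𝔽[X] := f.comp (X + Polynomial.C a)

/-- the polynomial `M(V) = c·f(V+a) - c·b` -/
noncomputable def Mpoly (f : 𝔽[X]) (c a b : 𝔽) : 𝔽[X] :=
  Polynomial.C c * fshift f a - Polynomial.C (c * b)

/-- `P(U,V) = f(U) - S(V)` as a polynomial in `U` over `𝔽[V]` -/
noncomputable def Pbig (f : 𝔽[X]) (c b : 𝔽) : Polynomial (Polynomial 𝔽) :=
  f.map (Polynomial.C : 𝔽 →+* Polynomial 𝔽) - Polynomial.C (Spoly f c b)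

/-- `Q(U,V) = f(U+a) - M(V)` -/
noncomputable def Qbig (f : 𝔽[X]) (c a b : 𝔽) : Polynomial (Polynomial 𝔽) :=
  (fshift f a).map (Polynomial.C : 𝔽 →+* Polynomial 𝔽) - Polynomial.C (Mpoly f c a b)

lemma Pbig_coeff (f : 𝔽[X]) (c b : 𝔽) (n : ℕ) :
    (Pbig f c b).coeff n
      = Polynomial.C (f.coeff n) - if n = 0 then Spoly f c b else 0 := by
  simp [Pbig, Polynomial.coeff_map, Polynomial.coeff_C]

lemma Qbig_coeff (f : 𝔽[X]) (c a b : 𝔽) (n : ℕ) :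
    (Qbig f c a b).coeff n
      = Polynomial.C ((fshift f a).coeff n) - if n = 0 then Mpoly f c a b else 0 := by
  simp [Qbig, Polynomial.coeff_map, Polynomial.coeff_C]

lemma natDegree_Spoly_le (f : 𝔽[X]) (c b : 𝔽) (d : ℕ) (hdeg : f.natDegree = d) :
    (Spoly f c b).natDegree ≤ d := by
  refine (Polynomial.natDegree_C_mul_le _ _).trans ?_
  rw [Polynomial.natDegree_sub_C, hdeg]

lemma natDegree_fshift (f : 𝔽[X]) (a : 𝔽) : (fshift f a).natDegree = f.natDegree := by
  rw [fshift, Polynomial.natDegree_comp, Polynomial.natDegree_X_add_C, mul_one]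

lemma natDegree_Mpoly_le (f : 𝔽[X]) (c a b : 𝔽) (d : ℕ) (hdeg : f.natDegree = d) :
    (Mpoly f c a b).natDegree ≤ d := by
  rw [Mpoly, Polynomial.natDegree_sub_C]
  refine (Polynomial.natDegree_C_mul_le _ _).trans ?_
  rw [natDegree_fshift, hdeg]

lemma coeff_Pbig_bound (f : 𝔽[X]) (c b : 𝔽) (d : ℕ) (hdeg : f.natDegree = d) :
    ∀ n, ((Pbig f c b).coeff n).natDegree ≤ d := by
  intro n
  rw [Pbig_coeff]
  refine (Polynomial.natDegree_sub_le _ _).trans ?_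
  refine max_le (by simp) ?_
  split_ifs
  · exact natDegree_Spoly_le f c b d hdeg
  · simp

lemma coeff_Pbig_const (f : 𝔽[X]) (c b : 𝔽) :
    ∀ n, 1 ≤ n → ((Pbig f c b).coeff n).natDegree = 0 := by
  intro n hn
  rw [Pbig_coeff, if_neg (by omega), sub_zero]
  exact Polynomial.natDegree_C _

lemma coeff_Qbig_bound (f : 𝔽[X]) (c a b : 𝔽) (d : ℕ) (hdeg : f.natDegree = d) :
    ∀ n, ((Qbig f c a b).coeff n).natDegree ≤ d := by
  intro n
  rw [Qbig_coeff]
  refine (Polynomial.natDegree_sub_le _ _).trans ?_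
  refine max_le (by simp) ?_
  split_ifs
  · exact natDegree_Mpoly_le f c a b d hdeg
  · simp

lemma coeff_Qbig_const (f : 𝔽[X]) (c a b : 𝔽) :
    ∀ n, 1 ≤ n → ((Qbig f c a b).coeff n).natDegree = 0 := by
  intro n hn
  rw [Qbig_coeff, if_neg (by omega), sub_zero]
  exact Polynomial.natDegree_C _

/-- cap for columns -/
def cap (d : ℕ) : Fin d ⊕ Fin d → ℕ := Sum.elim (fun _ => d) (fun _ => 0)

lemma sum_cap (d : ℕ) : ∑ j, cap d j = d * d := by
  rw [Fintype.sum_sum_type]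
  simp [cap, Finset.card_univ, mul_comm]

section DegBound

variable {A : Type*} [CommRing A]

lemma entry_natDegree_le (d : ℕ) (P Q : Polynomial (A[X]))
    (hP0 : ∀ n, (P.coeff n).natDegree ≤ d) (hP1 : ∀ n, 1 ≤ n → (P.coeff n).natDegree = 0)
    (hQ0 : ∀ n, (Q.coeff n).natDegree ≤ d) (hQ1 : ∀ n, 1 ≤ n → (Q.coeff n).natDegree = 0)
    (r j : Fin d ⊕ Fin d) : ((sylMat d P Q) r j).natDegree ≤ cap d j := by
  rcases j with j | j
  · rcases r with i | i
    · simp only [sylMat, Matrix.of_apply, Sum.elim_inl, cap]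
      split_ifs
      · exact hP0 _
      · simp
    · simp only [sylMat, Matrix.of_apply, Sum.elim_inr, cap]
      split_ifs
      · exact hQ0 _
      · simp
  · rcases r with i | i
    · simp only [sylMat, Matrix.of_apply, Sum.elim_inl, Sum.elim_inr, cap, colIdx]
      have hi := i.isLt
      simp only [show (i:ℕ) ≤ d + (j:ℕ) from by omega, if_true]
      exact le_of_eq (hP1 _ (by omega))
    · simp only [sylMat, Matrix.of_apply, Sum.elim_inl, Sum.elim_inr, cap, colIdx]
      have hi := i.isLt
      simp only [show (i:ℕ) ≤ d + (j:ℕ) from by omega, if_true]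
      exact le_of_eq (hQ1 _ (by omega))

lemma natDegree_sylDet_le (d : ℕ) (P Q : Polynomial (A[X]))
    (hP0 : ∀ n, (P.coeff n).natDegree ≤ d) (hP1 : ∀ n, 1 ≤ n → (P.coeff n).natDegree = 0)
    (hQ0 : ∀ n, (Q.coeff n).natDegree ≤ d) (hQ1 : ∀ n, 1 ≤ n → (Q.coeff n).natDegree = 0) :
    ((sylMat d P Q).det).natDegree ≤ d * d := by
  rw [Matrix.det_apply]
  refine Polynomial.natDegree_sum_le_of_forall_le _ _ fun σ _ => ?_
  rw [Units.smul_def, zsmul_eq_mul]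
  refine (Polynomial.natDegree_mul_le).trans ?_
  rw [Polynomial.natDegree_intCast, zero_add]
  refine (Polynomial.natDegree_prod_le _ _).trans ?_
  rw [← sum_cap d]
  exact Finset.sum_le_sum fun i _ =>
    entry_natDegree_le d P Q hP0 hP1 hQ0 hQ1 (σ i) i

lemma coeff_sylDet (d : ℕ) (P Q : Polynomial (A[X]))
    (hP0 : ∀ n, (P.coeff n).natDegree ≤ d) (hP1 : ∀ n, 1 ≤ n → (P.coeff n).natDegree = 0)
    (hQ0 : ∀ n, (Q.coeff n).natDegree ≤ d) (hQ1 : ∀ n, 1 ≤ n → (Q.coeff n).natDegree = 0) :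
    ((sylMat d P Q).det).coeff (d * d)
      = (Matrix.of fun r j => ((sylMat d P Q) r j).coeff (cap d j)).det := by
  rw [Matrix.det_apply, Matrix.det_apply, Polynomial.finset_sum_coeff]
  refine Finset.sum_congr rfl fun σ _ => ?_
  rw [Units.smul_def, Units.smul_def, zsmul_eq_mul, zsmul_eq_mul,
    Polynomial.coeff_intCast_mul]
  congr 1
  rw [← sum_cap d, coeff_prod_caps Finset.univ _ (fun i => cap d i)
    (fun i _ => entry_natDegree_le d P Q hP0 hP1 hQ0 hQ1 (σ i) i)]
  rfl

end DegBound

end Part2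

namespace Part2

open CBoom

variable {𝔽 : Type*} [Field 𝔽]

lemma fshift_coeff_top (f : 𝔽[X]) (a : 𝔽) (d : ℕ) (hdeg : f.natDegree = d) :
    (fshift f a).coeff d = f.coeff d := by
  have h1 : (fshift f a).natDegree = d := by rw [natDegree_fshift, hdeg]
  have h2 : (fshift f a).coeff d = (fshift f a).leadingCoeff := by
    rw [Polynomial.leadingCoeff, h1]
  have h3 : (fshift f a).leadingCoeff = f.leadingCoeff := by
    rw [fshift, Polynomial.leadingCoeff_comp (by rw [Polynomial.natDegree_X_add_C]; omega)]
    rw [Polynomial.leadingCoeff_X_add_C, one_pow, mul_one]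
  rw [h2, h3, Polynomial.leadingCoeff, hdeg]

lemma coeff_Hdet_ne_zero (f : 𝔽[X]) (d : ℕ) (hdeg : f.natDegree = d) (hd : 1 ≤ d)
    (c : 𝔽) (hc : c ≠ 0) (hc2 : c ^ 2 ≠ 1) (a b : 𝔽) :
    ((sylMat d (Pbig f c b) (Qbig f c a b)).det).coeff (d * d) ≠ 0 := by
  classical
  set L := f.coeff d with hLdef
  have hf0 : f ≠ 0 := by
    intro h
    rw [h, Polynomial.natDegree_zero] at hdeg
    omega
  have hL : L ≠ 0 := by
    have : f.leadingCoeff ≠ 0 := Polynomial.leadingCoeff_ne_zero.mpr hf0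
    rwa [Polynomial.leadingCoeff, hdeg] at this
  have hd0 : d ≠ 0 := by omega
  rw [coeff_sylDet d _ _ (coeff_Pbig_bound f c b d hdeg) (coeff_Pbig_const f c b)
    (coeff_Qbig_bound f c a b d hdeg) (coeff_Qbig_const f c a b)]
  set A1 : Matrix (Fin d) (Fin d) 𝔽 := Matrix.diagonal fun _ => -(c⁻¹ * L) with hA1def
  set B1 : Matrix (Fin d) (Fin d) 𝔽 :=
    Matrix.of fun i j => f.coeff (d + (j : ℕ) - (i : ℕ)) with hB1def
  set C1 : Matrix (Fin d) (Fin d) 𝔽 := Matrix.diagonal fun _ => -(c * L) with hC1def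
  set D1 : Matrix (Fin d) (Fin d) 𝔽 :=
    Matrix.of fun i j => (fshift f a).coeff (d + (j : ℕ) - (i : ℕ)) with hD1def
  have hScoeff : (Spoly f c b).coeff d = c⁻¹ * L := by
    rw [Spoly, Polynomial.coeff_C_mul, Polynomial.coeff_sub, Polynomial.coeff_C,
      if_neg hd0, sub_zero]
  have hMcoeff : (Mpoly f c a b).coeff d = c * L := by
    rw [Mpoly, Polynomial.coeff_sub, Polynomial.coeff_C_mul, Polynomial.coeff_C,
      if_neg hd0, sub_zero, fshift_coeff_top f a d hdeg]
  have hM : (Matrix.of fun r j =>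
        ((sylMat d (Pbig f c b) (Qbig f c a b)) r j).coeff (cap d j))
      = Matrix.fromBlocks A1 B1 C1 D1 := by
    ext r j
    rcases r with i | i <;> rcases j with j | j
    · -- inl inl : cap d
      show ((if (i:ℕ) ≤ (j:ℕ) then (Pbig f c b).coeff ((j:ℕ) - i) else 0)).coeff d
          = A1 i j
      rcases eq_or_ne i j with rfl | hne
      · rw [if_pos le_rfl, Nat.sub_self, Pbig_coeff, if_pos rfl, Polynomial.coeff_sub,
          Polynomial.coeff_C, if_neg hd0, hScoeff, hA1def, Matrix.diagonal_apply_eq,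
          zero_sub]
      · rw [hA1def, Matrix.diagonal_apply_ne _ hne]
        by_cases hle : (i:ℕ) ≤ (j:ℕ)
        · have hpos : (j:ℕ) - i ≠ 0 := by
            have : (i:ℕ) ≠ (j:ℕ) := fun h => hne (Fin.ext h)
            omega
          rw [if_pos hle, Pbig_coeff, if_neg hpos, sub_zero, Polynomial.coeff_C,
            if_neg hd0]
        · rw [if_neg hle, Polynomial.coeff_zero]
    · -- inl inr : cap 0
      show ((if (i:ℕ) ≤ d + (j:ℕ) then (Pbig f c b).coeff (d + (j:ℕ) - i) else 0)).coeff 0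
          = B1 i j
      have hi := i.isLt
      rw [if_pos (by omega), Pbig_coeff, if_neg (by omega), sub_zero,
        Polynomial.coeff_C_zero]
      rfl
    · -- inr inl : cap d
      show ((if (i:ℕ) ≤ (j:ℕ) then (Qbig f c a b).coeff ((j:ℕ) - i) else 0)).coeff d
          = C1 i j
      rcases eq_or_ne i j with rfl | hne
      · rw [if_pos le_rfl, Nat.sub_self, Qbig_coeff, if_pos rfl, Polynomial.coeff_sub,
          Polynomial.coeff_C, if_neg hd0, hMcoeff, hC1def, Matrix.diagonal_apply_eq,
          zero_sub]
      · rw [hC1def, Matrix.diagonal_apply_ne _ hne]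
        by_cases hle : (i:ℕ) ≤ (j:ℕ)
        · have hpos : (j:ℕ) - i ≠ 0 := by
            have : (i:ℕ) ≠ (j:ℕ) := fun h => hne (Fin.ext h)
            omega
          rw [if_pos hle, Qbig_coeff, if_neg hpos, sub_zero, Polynomial.coeff_C,
            if_neg hd0]
        · rw [if_neg hle, Polynomial.coeff_zero]
    · -- inr inr : cap 0
      show ((if (i:ℕ) ≤ d + (j:ℕ) then (Qbig f c a b).coeff (d + (j:ℕ) - i) else 0)).coeff 0
          = D1 i j
      have hi := i.isLt
      rw [if_pos (by omega), Qbig_coeff, if_neg (by omega), sub_zero,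
        Polynomial.coeff_C_zero]
      rfl
  rw [hM]
  -- eliminate lower-left block
  have hz : (-(c^2)) • A1 + C1 = 0 := by
    ext i j
    rcases eq_or_ne i j with rfl | hne
    · simp only [Matrix.add_apply, Matrix.smul_apply, hA1def, hC1def,
        Matrix.diagonal_apply_eq, Matrix.zero_apply, smul_eq_mul]
      field_simp
      ring
    · simp [hA1def, hC1def, Matrix.diagonal_apply_ne _ hne]
  have hEblocks : (Matrix.fromBlocks (1 : Matrix (Fin d) (Fin d) 𝔽) 0
        ((-(c^2)) • (1 : Matrix (Fin d) (Fin d) 𝔽)) 1) * Matrix.fromBlocks A1 B1 C1 D1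
      = Matrix.fromBlocks A1 B1 0 ((-(c^2)) • B1 + D1) := by
    rw [Matrix.fromBlocks_multiply]
    have e11 : (1 : Matrix (Fin d) (Fin d) 𝔽) * A1 + 0 * C1 = A1 := by simp
    have e12 : (1 : Matrix (Fin d) (Fin d) 𝔽) * B1 + 0 * D1 = B1 := by simp
    have e21 : ((-(c^2)) • (1 : Matrix (Fin d) (Fin d) 𝔽)) * A1 + 1 * C1 = 0 := by
      rw [Matrix.smul_mul, Matrix.one_mul, Matrix.one_mul]
      exact hz
    have e22 : ((-(c^2)) • (1 : Matrix (Fin d) (Fin d) 𝔽)) * B1 + 1 * D1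
        = (-(c^2)) • B1 + D1 := by
      rw [Matrix.smul_mul, Matrix.one_mul, Matrix.one_mul]
    rw [e11, e12, e21, e22]
  have hdetE : (Matrix.fromBlocks (1 : Matrix (Fin d) (Fin d) 𝔽) 0
      ((-(c^2)) • (1 : Matrix (Fin d) (Fin d) 𝔽)) 1).det = 1 := by
    rw [Matrix.det_fromBlocks_zero₁₂]
    simp
  have hdet2 : (Matrix.fromBlocks A1 B1 C1 D1).det
      = A1.det * ((-(c^2)) • B1 + D1).det := by
    have h := congrArg Matrix.det hEblocks
    rw [Matrix.det_mul, hdetE, one_mul] at h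
    rw [h, Matrix.det_fromBlocks_zero₂₁]
  rw [hdet2]
  have hA1det : A1.det = (-(c⁻¹ * L))^d := by
    rw [hA1def, Matrix.det_diagonal]
    simp [Finset.card_univ]
  have hFtri : ((-(c^2)) • B1 + D1).det = ((1 - c^2) * L)^d := by
    have htri : ((-(c^2)) • B1 + D1).BlockTriangular OrderDual.toDual := by
      intro i j hij
      have hij' : (i:ℕ) < (j:ℕ) := hij
      simp only [Matrix.add_apply, Matrix.smul_apply, hB1def, hD1def, Matrix.of_apply,
        smul_eq_mul]
      have hz1 : f.coeff (d + (j:ℕ) - i) = 0 :=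
        Polynomial.coeff_eq_zero_of_natDegree_lt (by rw [hdeg]; omega)
      have hz2 : (fshift f a).coeff (d + (j:ℕ) - i) = 0 :=
        Polynomial.coeff_eq_zero_of_natDegree_lt (by rw [natDegree_fshift, hdeg]; omega)
      rw [hz1, hz2]
      ring
    rw [Matrix.det_of_lowerTriangular _ htri]
    have hdiag : ∀ i : Fin d, ((-(c^2)) • B1 + D1) i i = (1 - c^2) * L := by
      intro i
      simp only [Matrix.add_apply, Matrix.smul_apply, hB1def, hD1def, Matrix.of_apply,
        smul_eq_mul]
      have he : d + (i:ℕ) - (i:ℕ) = d := by omega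
      rw [he, fshift_coeff_top f a d hdeg]
      ring
    rw [Finset.prod_congr rfl (fun i _ => hdiag i)]
    simp [Finset.card_univ]
  rw [hA1det, hFtri]
  exact mul_ne_zero (pow_ne_zero _ (neg_ne_zero.mpr (mul_ne_zero (inv_ne_zero hc) hL)))
    (pow_ne_zero _ (mul_ne_zero (sub_ne_zero.mpr (Ne.symm hc2)) hL))

end Part2

namespace Part2

open CBoom

variable {𝔽 : Type*} [Field 𝔽]

lemma key_mult [DecidableEq 𝔽] (f : 𝔽[X]) (d : ℕ) (hdeg : f.natDegree = d) (hd : 1 ≤ d)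
    (c a b : 𝔽) (hc : c ≠ 0) (v₀ : 𝔽) (s : Finset 𝔽)
    (hs : ∀ u ∈ s, f.eval v₀ - c * f.eval u = b ∧
      c * f.eval (v₀ + a) - f.eval (u + a) = c * b) :
    (X - Polynomial.C v₀) ^ s.card ∣ (sylMat d (Pbig f c b) (Qbig f c a b)).det := by
  classical
  set k := s.card with hk
  set p : 𝔽[X] := f - Polynomial.C (c⁻¹ * (f.eval v₀ - b)) with hpdef
  set q : 𝔽[X] := fshift f a - Polynomial.C (c * f.eval (v₀ + a) - c * b) with hqdef
  have hCcomp : (Polynomial.evalRingHom v₀).comp (Polynomial.C : 𝔽 →+* 𝔽[X])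
      = RingHom.id 𝔽 := by
    ext x
    simp
  have hPmap : (Pbig f c b).map (Polynomial.evalRingHom v₀) = p := by
    rw [Pbig, Polynomial.map_sub, Polynomial.map_C, Polynomial.map_map, hCcomp,
      Polynomial.map_id]
    congr 1
    rw [Spoly]
    simp
  have hQmap : (Qbig f c a b).map (Polynomial.evalRingHom v₀) = q := by
    rw [Qbig, Polynomial.map_sub, Polynomial.map_C, Polynomial.map_map, hCcomp,
      Polynomial.map_id]
    congr 1
    rw [Mpoly]
    simp only [Polynomial.coe_evalRingHom, Polynomial.eval_sub, Polynomial.eval_mul,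
      Polynomial.eval_C]
    rw [fshift, Polynomial.eval_comp]
    simp
  have hp_deg : p.natDegree = d := by rw [hpdef, Polynomial.natDegree_sub_C, hdeg]
  have hq_deg : q.natDegree = d := by
    rw [hqdef, Polynomial.natDegree_sub_C, natDegree_fshift, hdeg]
  have hp0 : p ≠ 0 := fun h => by
    rw [h, Polynomial.natDegree_zero] at hp_deg
    omega
  have hq0 : q ≠ 0 := fun h => by
    rw [h, Polynomial.natDegree_zero] at hq_deg
    omega
  have hroots : ∀ u ∈ s, p.IsRoot u ∧ q.IsRoot u := by
    intro u hu
    obtain ⟨h1, h2⟩ := hs u hu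
    constructor
    · show p.eval u = 0
      rw [hpdef]
      simp only [Polynomial.eval_sub, Polynomial.eval_C]
      have h3 : f.eval v₀ - b = c * f.eval u := by linear_combination h1
      rw [h3, inv_mul_cancel_left₀ hc, sub_self]
    · show q.eval u = 0
      rw [hqdef]
      simp only [Polynomial.eval_sub, Polynomial.eval_C]
      rw [fshift, Polynomial.eval_comp]
      simp only [Polynomial.eval_add, Polynomial.eval_X, Polynomial.eval_C]
      linear_combination -h2
  set m : 𝔽[X] := ∏ u ∈ s, (X - Polynomial.C u) with hmdef
  have hm_eq : m = (s.val.map fun u => X - Polynomial.C u).prod := rfl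
  have hmdvd : ∀ (r : 𝔽[X]), r ≠ 0 → (∀ u ∈ s, r.IsRoot u) → m ∣ r := by
    intro r hr0 hr
    rw [hm_eq]
    refine (Multiset.prod_X_sub_C_dvd_iff_le_roots hr0 s.val).mpr ?_
    refine Multiset.le_iff_count.mpr fun x => ?_
    by_cases hx : x ∈ s
    · have h1 : Multiset.count x s.val = 1 := Multiset.count_eq_one_of_mem s.nodup hx
      rw [h1]
      refine Multiset.one_le_count_iff_mem.mpr ?_
      exact Polynomial.mem_roots'.mpr ⟨hr0, hr x hx⟩
    · rw [Multiset.count_eq_zero_of_notMem (fun hmem => hx hmem)]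
      exact Nat.zero_le _
  obtain ⟨p', hp'⟩ := hmdvd p hp0 (fun u hu => (hroots u hu).1)
  obtain ⟨q', hq'⟩ := hmdvd q hq0 (fun u hu => (hroots u hu).2)
  have hm_monic : m.Monic :=
    Polynomial.monic_prod_of_monic _ _ (fun u _ => Polynomial.monic_X_sub_C u)
  have hm_deg : m.natDegree = k := by
    rw [hmdef, Polynomial.natDegree_prod_of_monic _ _
      (fun u _ => Polynomial.monic_X_sub_C u)]
    simp [Polynomial.natDegree_X_sub_C, hk]
  have hp'0 : p' ≠ 0 := fun h => hp0 (by rw [hp', h, mul_zero])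
  have hq'0 : q' ≠ 0 := fun h => hq0 (by rw [hq', h, mul_zero])
  have hdk_p : k + p'.natDegree = d := by
    have h1 : (m * p').natDegree = d := by rw [← hp', hp_deg]
    rwa [Polynomial.natDegree_mul hm_monic.ne_zero hp'0, hm_deg] at h1
  have hdk_q : k + q'.natDegree = d := by
    have h1 : (m * q').natDegree = d := by rw [← hq', hq_deg]
    rwa [Polynomial.natDegree_mul hm_monic.ne_zero hq'0, hm_deg] at h1
  rcases Nat.eq_zero_or_pos k with hk0 | hkpos
  · rw [hk0, pow_zero]
    exact one_dvd _
  set lam : Fin k → (Fin d ⊕ Fin d) → 𝔽 := fun t =>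
    Sum.elim (fun i : Fin d => (X ^ (t : ℕ) * q').coeff i)
      (fun i : Fin d => (-(X ^ (t : ℕ) * p')).coeff i) with hlamdef
  have hli : LinearIndependent 𝔽 lam := by
    rw [Fintype.linearIndependent_iff]
    intro g hg t
    set w : 𝔽[X] := polyOfVec g * p' with hwdef
    have hcoeffs : ∀ i : Fin d, w.coeff i = 0 := by
      intro i
      have hgi := congrFun hg (Sum.inr i)
      rw [Finset.sum_apply] at hgi
      simp only [Pi.smul_apply, hlamdef, Sum.elim_inr, Polynomial.coeff_neg,
        smul_eq_mul, Pi.zero_apply] at hgi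
      have h2 : ∑ t' : Fin k, g t' * -((X ^ (t' : ℕ) * p').coeff i) = 0 := hgi
      have h3 : ∑ t' : Fin k, g t' * (X ^ (t' : ℕ) * p').coeff i = 0 := by
        have := neg_eq_zero.mpr h2
        rw [← Finset.sum_neg_distrib] at this
        simpa using this
      rw [hwdef, coeff_mul_single]
      refine Eq.trans ?_ h3
      refine Finset.sum_congr rfl fun t' _ => ?_
      congr 1
      rw [mul_comm (X ^ (t' : ℕ)) p', Polynomial.coeff_mul_X_pow']
    have hgdeg : (polyOfVec g).natDegree ≤ k - 1 := by
      refine Polynomial.natDegree_sum_le_of_forall_le _ _ fun t' _ => ?_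
      exact (Polynomial.natDegree_monomial_le _).trans (by have := t'.isLt; omega)
    have hwdeg : w.natDegree < d := by
      have h1 : w.natDegree ≤ (polyOfVec g).natDegree + p'.natDegree :=
        Polynomial.natDegree_mul_le
      have h2 := hgdeg
      omega
    have hw0 : w = 0 := by
      ext n
      rw [Polynomial.coeff_zero]
      rcases lt_or_ge n d with hn | hn
      · exact hcoeffs ⟨n, hn⟩
      · exact Polynomial.coeff_eq_zero_of_natDegree_lt (lt_of_lt_of_le hwdeg hn)
    have hg0 : polyOfVec g = 0 := by
      rcases mul_eq_zero.mp (hwdef ▸ hw0) with h | h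
      · exact h
      · exact absurd h hp'0
    have := polyOfVec_coeff g t
    rw [hg0, Polynomial.coeff_zero] at this
    exact this.symm
  have hker : ∀ t, Matrix.vecMul (lam t)
      (((sylMat d (Pbig f c b) (Qbig f c a b))).map (Polynomial.evalRingHom v₀)) = 0 := by
    intro t
    rw [sylMat_map, hPmap, hQmap]
    funext j
    rw [vecMul_sylMat]
    have e1 : polyOfVec (lam t ∘ Sum.inl) = X ^ (t : ℕ) * q' := by
      have h0 : lam t ∘ Sum.inl = fun i : Fin d => (X ^ (t : ℕ) * q').coeff i := rfl
      rw [h0]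
      refine polyOfVec_eq _ ?_
      rw [Polynomial.natDegree_mul (pow_ne_zero _ Polynomial.X_ne_zero) hq'0,
        Polynomial.natDegree_X_pow]
      have := t.isLt
      omega
    have e2 : polyOfVec (lam t ∘ Sum.inr) = -(X ^ (t : ℕ) * p') := by
      have h0 : lam t ∘ Sum.inr = fun i : Fin d => (-(X ^ (t : ℕ) * p')).coeff i := rfl
      rw [h0]
      refine polyOfVec_eq _ ?_
      rw [Polynomial.natDegree_neg,
        Polynomial.natDegree_mul (pow_ne_zero _ Polynomial.X_ne_zero) hp'0,
        Polynomial.natDegree_X_pow]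
      have := t.isLt
      omega
    rw [e1, e2]
    have hzero : X ^ (t : ℕ) * q' * p + -(X ^ (t : ℕ) * p') * q = 0 := by
      rw [hp', hq']
      ring
    rw [hzero, Polynomial.coeff_zero]
    rfl
  exact pow_dvd_det_of_ker _ v₀ lam hli hker

end Part2

open CBoom Part2 in
/-- proof -/
theorem c_boomerang_bound' {𝔽 : Type*} [Field 𝔽] [Fintype 𝔽]
    (f : Polynomial 𝔽) (d : ℕ) (hdeg : f.natDegree = d) (hd : 1 ≤ d)
    (c : 𝔽) (hc : c ≠ 0) (hc2 : c ^ 2 ≠ 1)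
    (a b : 𝔽) (ha : a ≠ 0) :
    Set.ncard {p : 𝔽 × 𝔽 |
      f.eval (p.1 + p.2) - c * f.eval p.1 = b ∧
      c * f.eval (p.1 + p.2 + a) - f.eval (p.1 + a) = c * b} ≤ d ^ 2 := by
  classical
  set H : Polynomial 𝔽 := (sylMat d (Pbig f c b) (Qbig f c a b)).det with hHdef
  set T : Finset (𝔽 × 𝔽) := Finset.univ.filter (fun w : 𝔽 × 𝔽 =>
    f.eval w.2 - c * f.eval w.1 = b ∧
    c * f.eval (w.2 + a) - f.eval (w.1 + a) = c * b) with hT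
  have hinj : Function.Injective (fun w : 𝔽 × 𝔽 => (w.1, w.1 + w.2)) := by
    intro w w' h
    have h1 := congrArg Prod.fst h
    have h2 := congrArg Prod.snd h
    simp only at h1 h2
    have h3 : w.2 = w'.2 := by
      rw [h1] at h2
      exact add_left_cancel h2
    exact Prod.ext h1 h3
  have himg : (fun w : 𝔽 × 𝔽 => (w.1, w.1 + w.2)) '' {p : 𝔽 × 𝔽 |
      f.eval (p.1 + p.2) - c * f.eval p.1 = b ∧
      c * f.eval (p.1 + p.2 + a) - f.eval (p.1 + a) = c * b} = ↑T := by
    ext w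
    constructor
    · rintro ⟨⟨x, y⟩, ⟨h1, h2⟩, rfl⟩
      simp only [hT, Finset.coe_filter, Set.mem_setOf_eq, Finset.mem_univ, true_and]
      exact ⟨h1, h2⟩
    · intro hw
      simp only [hT, Finset.coe_filter, Set.mem_setOf_eq, Finset.mem_univ, true_and] at hw
      refine ⟨(w.1, w.2 - w.1), ⟨?_, ?_⟩, ?_⟩
      · simpa [add_sub_cancel] using hw.1
      · simpa [add_sub_cancel] using hw.2
      · simp
  have hset : Set.ncard {p : 𝔽 × 𝔽 |
      f.eval (p.1 + p.2) - c * f.eval p.1 = b ∧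
      c * f.eval (p.1 + p.2 + a) - f.eval (p.1 + a) = c * b} = T.card := by
    rw [← Set.ncard_image_of_injective _ hinj, himg, Set.ncard_coe_finset]
  rw [hset]
  have hH0 : H ≠ 0 := by
    intro h0
    have hcf := coeff_Hdet_ne_zero f d hdeg hd c hc hc2 a b
    rw [← hHdef, h0] at hcf
    simp at hcf
  have hfib : ∀ v₀ : 𝔽, (T.filter fun w => w.2 = v₀).card ≤
      Polynomial.rootMultiplicity v₀ H := by
    intro v₀
    rw [Polynomial.le_rootMultiplicity_iff hH0]
    have hcard : (T.filter fun w => w.2 = v₀).card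
        = ((T.filter fun w => w.2 = v₀).image Prod.fst).card := by
      rw [Finset.card_image_of_injOn]
      intro w hw w' hw' hww
      simp only [Finset.coe_filter, Set.mem_setOf_eq, Finset.mem_coe,
        Finset.mem_filter] at hw hw'
      exact Prod.ext hww (by rw [hw.2, hw'.2])
    rw [hcard, hHdef]
    refine key_mult f d hdeg hd c a b hc v₀ _ ?_
    intro u hu
    simp only [Finset.mem_image, Finset.mem_filter] at hu
    obtain ⟨w, ⟨hwT, hw2⟩, rfl⟩ := hu
    rw [hT, Finset.mem_filter] at hwT
    rw [← hw2]
    exact hwT.2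
  have hsum2 : ∑ v₀ : 𝔽, Polynomial.rootMultiplicity v₀ H ≤ H.natDegree := by
    have e1 : ∀ v₀ : 𝔽, Polynomial.rootMultiplicity v₀ H = H.roots.count v₀ :=
      fun v₀ => (Polynomial.count_roots H).symm
    rw [Finset.sum_congr rfl fun v₀ _ => e1 v₀]
    have e2 : ∑ v₀ : 𝔽, H.roots.count v₀
        = ∑ v₀ ∈ H.roots.toFinset, H.roots.count v₀ :=
      (Finset.sum_subset (Finset.subset_univ _) (fun x _ hx =>
        Multiset.count_eq_zero_of_notMem (fun hm => hx (Multiset.mem_toFinset.mpr hm)))).symm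
    rw [e2, Multiset.toFinset_sum_count_eq]
    exact (Polynomial.card_roots' H)
  calc T.card = ∑ v₀ : 𝔽, (T.filter fun w => w.2 = v₀).card :=
      Finset.card_eq_sum_card_fiberwise (fun w _ => Finset.mem_univ w.2)
    _ ≤ ∑ v₀ : 𝔽, Polynomial.rootMultiplicity v₀ H :=
      Finset.sum_le_sum (fun v₀ _ => hfib v₀)
    _ ≤ H.natDegree := hsum2
    _ ≤ d * d := natDegree_sylDet_le d _ _ (coeff_Pbig_bound f c b d hdeg)
        (coeff_Pbig_const f c b) (coeff_Qbig_bound f c a b d hdeg)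
        (coeff_Qbig_const f c a b)
    _ = d ^ 2 := (sq d).symm


/-- The `c`-Boomerang Connectivity Table entry of a function `F : 𝔽 → 𝔽` at `(a, b)`. -/
noncomputable def cBCT {𝔽 : Type*} [Field 𝔽] (F : 𝔽 → 𝔽) (c a b : 𝔽) : ℕ :=
  Set.ncard {p : 𝔽 × 𝔽 |
    F (p.1 + p.2) - c * F p.1 = b ∧ c * F (p.1 + p.2 + a) - F (p.1 + a) = c * b}

/-- For a finite field `𝔽_q`, a polynomial `f` of degree `d ≥ 1`, `c ≠ 0` with
`c² ≠ 1`, `a ≠ 0` and any `b`, the `c`-BCT entry satisfies `₍c₎B_f(a,b) ≤ d²`. -/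
theorem c_boomerang_bound {𝔽 : Type*} [Field 𝔽] [Fintype 𝔽]
    (f : Polynomial 𝔽) (d : ℕ) (hdeg : f.natDegree = d) (hd : 1 ≤ d)
    (c : 𝔽) (hc : c ≠ 0) (hc2 : c ^ 2 ≠ 1)
    (a b : 𝔽) (ha : a ≠ 0) :
    cBCT (fun x => f.eval x) c a b ≤ d ^ 2 := by
  have h := c_boomerang_bound' f d hdeg hd c hc hc2 a b ha
  simpa [cBCT] using h
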